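/- Let g_min = min{g_s, g_w} with g_s, g_w independent α-μ random variables (parameters α, μ ∈ ℤ₊, scales Ω_s, Ω_w > 0), and let Ω̃ = 1/(Ω_s^{−α} + Ω_w^{−α}). Then E[g_min] = (1/(Ω_s^{αμ} Γ(μ))) Σ_{m=0}^{μ−1} (Ω̃^{μ+m+2/α}/(m! μ^{2/α} Ω_w^{mα})) Γ(μ + m + 2/α) + (1/(Ω_w^{αμ} Γ(μ))) Σ_{n=0}^{μ−1} (Ω̃^{μ+n+2/α}/(n! μ^{2/α} Ω_s^{nα})) Γ(μ + n + 2/α). -/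

import Mathlib

open MeasureTheory Real Set

lemma myIntegrable {p s b : ℝ} (hs : -1 < s) (hp : 0 < p) (hb : 0 < b) :
    IntegrableOn (fun x : ℝ => x ^ s * Real.exp (-b * x ^ p)) (Ioi 0) := by
  set e : ℝ := (s + 1) / p - 1 with he
  have base : IntegrableOn (fun y : ℝ => y ^ e * Real.exp (-b * y)) (Ioi 0) := by
    have h0 : IntegrableOn (fun y : ℝ => Real.exp (-y) * y ^ e) (Ioi 0) :=
      Real.GammaIntegral_convergent (div_pos (by linarith) hp)
    have h1 := (integrableOn_Ioi_comp_mul_left_iff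
        (fun y : ℝ => Real.exp (-y) * y ^ e) 0 hb).mpr (by simpa using h0)
    have h2 : IntegrableOn
        (fun x : ℝ => Real.exp (-(b * x)) * (b * x) ^ e * b ^ (-e)) (Ioi 0) :=
      h1.mul_const _
    refine h2.congr_fun (fun x hx => ?_) measurableSet_Ioi
    have hx0 : (0:ℝ) < x := hx
    have hbb : b ^ e * b ^ (-e) = 1 := by rw [← Real.rpow_add hb]; simp
    calc Real.exp (-(b * x)) * (b * x) ^ e * b ^ (-e)
        = (b ^ e * b ^ (-e)) * (x ^ e * Real.exp (-b * x)) := by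
          rw [Real.mul_rpow hb.le hx0.le]; ring_nf
      _ = x ^ e * Real.exp (-b * x) := by rw [hbb, one_mul]
  have key := (integrableOn_Ioi_comp_rpow_iff'
      (fun y : ℝ => y ^ e * Real.exp (-b * y)) hp.ne').mpr base
  refine key.congr_fun (fun x hx => ?_) measurableSet_Ioi
  have hx0 : (0:ℝ) < x := hx
  beta_reduce
  rw [smul_eq_mul, ← mul_assoc, ← Real.rpow_mul hx0.le, ← Real.rpow_add hx0,
    show p - 1 + p * e = s by rw [he]; field_simp; ring]

lemma half (α μ : ℕ) (hα : 1 ≤ α) (hμ : 1 ≤ μ) (Ωt Ωo T : ℝ)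
    (hΩt : 0 < Ωt) (hΩo : 0 < Ωo) (hT : 0 < T) :
    IntegrableOn (fun x : ℝ =>
      x * ((α * Real.exp (-(μ:ℝ) * x ^ ((α : ℝ) / 2) / T)) /
            (2 * Ωt ^ (α * μ) * Real.Gamma μ) *
          ∑ m ∈ Finset.range μ,
            (μ:ℝ) ^ (μ + m) * x ^ ((α * (μ + m) : ℝ) / 2 - 1) / (m.factorial * Ωo ^ (m * α))))
      (Ioi 0) ∧
    ∫ x in Ioi (0:ℝ),
      x * ((α * Real.exp (-(μ:ℝ) * x ^ ((α : ℝ) / 2) / T)) /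
            (2 * Ωt ^ (α * μ) * Real.Gamma μ) *
          ∑ m ∈ Finset.range μ,
            (μ:ℝ) ^ (μ + m) * x ^ ((α * (μ + m) : ℝ) / 2 - 1) / (m.factorial * Ωo ^ (m * α)))
    = (1 / (Ωt ^ (α * μ) * Real.Gamma μ)) *
        ∑ m ∈ Finset.range μ,
          (T ^ ((μ + m : ℝ) + 2 / α) /
            (m.factorial * (μ:ℝ) ^ ((2:ℝ)/α) * Ωo ^ (m * α))) *
          Real.Gamma ((μ:ℝ) + m + 2 / α) := by
  have hα1 : (1:ℝ) ≤ α := by exact_mod_cast hα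
  have hμ1 : (1:ℝ) ≤ μ := by exact_mod_cast hμ
  have hαR : (0:ℝ) < α := by linarith
  have hμR : (0:ℝ) < μ := by linarith
  have hp : (0:ℝ) < (α:ℝ)/2 := by positivity
  have hb : (0:ℝ) < (μ:ℝ)/T := by positivity
  have hΓ : 0 < Real.Gamma μ := Real.Gamma_pos_of_pos hμR
  have hq : ∀ m : ℕ, (-1:ℝ) < (α * (μ + m) : ℝ) / 2 := by
    intro m
    have h1 : (0:ℝ) ≤ (α * (μ + m) : ℝ) / 2 := by positivity
    linarith
  have hEq : EqOn (fun x : ℝ =>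
      x * ((α * Real.exp (-(μ:ℝ) * x ^ ((α : ℝ) / 2) / T)) /
            (2 * Ωt ^ (α * μ) * Real.Gamma μ) *
          ∑ m ∈ Finset.range μ,
            (μ:ℝ) ^ (μ + m) * x ^ ((α * (μ + m) : ℝ) / 2 - 1) / (m.factorial * Ωo ^ (m * α))))
      (fun x : ℝ => ∑ m ∈ Finset.range μ,
        ((α:ℝ) / (2 * Ωt ^ (α * μ) * Real.Gamma μ) *
          ((μ:ℝ) ^ (μ + m) / (m.factorial * Ωo ^ (m * α)))) *
        (x ^ ((α * (μ + m) : ℝ) / 2) * Real.exp (-((μ:ℝ)/T) * x ^ ((α:ℝ)/2))))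
      (Ioi 0) := by
    intro x hx
    have hx0 : (0:ℝ) < x := hx
    simp only [Finset.mul_sum]
    refine Finset.sum_congr rfl fun m _ => ?_
    have hxq : x ^ ((α * (μ + m) : ℝ) / 2 - 1) * x = x ^ ((α * (μ + m) : ℝ) / 2) := by
      rw [← Real.rpow_add_one hx0.ne']
      congr 1; ring
    have hexp : Real.exp (-(μ:ℝ) * x ^ ((α:ℝ)/2) / T)
        = Real.exp (-((μ:ℝ)/T) * x ^ ((α:ℝ)/2)) := by
      congr 1; ring
    rw [hexp, ← hxq]
    ring
  have hint : ∀ m ∈ Finset.range μ, IntegrableOn (fun x : ℝ =>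
      ((α:ℝ) / (2 * Ωt ^ (α * μ) * Real.Gamma μ) *
        ((μ:ℝ) ^ (μ + m) / (m.factorial * Ωo ^ (m * α)))) *
      (x ^ ((α * (μ + m) : ℝ) / 2) * Real.exp (-((μ:ℝ)/T) * x ^ ((α:ℝ)/2)))) (Ioi 0) :=
    fun m _ => (myIntegrable (hq m) hp hb).const_mul _
  constructor
  · have hs : IntegrableOn (fun x : ℝ => ∑ m ∈ Finset.range μ,
        ((α:ℝ) / (2 * Ωt ^ (α * μ) * Real.Gamma μ) *
          ((μ:ℝ) ^ (μ + m) / (m.factorial * Ωo ^ (m * α)))) *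
        (x ^ ((α * (μ + m) : ℝ) / 2) * Real.exp (-((μ:ℝ)/T) * x ^ ((α:ℝ)/2)))) (Ioi 0) :=
      integrable_finset_sum _ hint
    exact hs.congr_fun (fun x hx => (hEq hx).symm) measurableSet_Ioi
  rw [setIntegral_congr_fun measurableSet_Ioi hEq, integral_finset_sum _ hint,
    Finset.mul_sum]
  refine Finset.sum_congr rfl fun m _ => ?_
  rw [MeasureTheory.integral_const_mul,
    integral_rpow_mul_exp_neg_mul_rpow hp (hq m) hb]
  have hfac : (0:ℝ) < m.factorial := by positivity
  have hE : ((α * (μ + m) : ℝ) / 2 + 1) / ((α:ℝ)/2) = (μ:ℝ) + m + 2/α := by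
    field_simp
  have hbE : ((μ:ℝ)/T) ^ (-((μ:ℝ) + m + 2/α))
      = T ^ ((μ:ℝ) + m + 2/α) / (μ:ℝ) ^ ((μ:ℝ) + m + 2/α) := by
    rw [Real.rpow_neg (le_of_lt hb), Real.div_rpow hμR.le hT.le, inv_div]
  rw [neg_div, hE, hbE]
  have hμE : (μ:ℝ) ^ (μ + m) / (μ:ℝ) ^ ((μ:ℝ) + m + 2/α)
      = ((μ:ℝ) ^ ((2:ℝ)/α))⁻¹ := by
    rw [← Real.rpow_natCast (μ:ℝ) (μ + m), ← Real.rpow_sub hμR,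
      ← Real.rpow_neg hμR.le]
    congr 1; push_cast; ring
  calc (α:ℝ) / (2 * Ωt ^ (α * μ) * Real.Gamma μ) *
        ((μ:ℝ) ^ (μ + m) / (m.factorial * Ωo ^ (m * α))) *
        (T ^ ((μ:ℝ) + m + 2/α) / (μ:ℝ) ^ ((μ:ℝ) + m + 2/α) * (1/((α:ℝ)/2)) *
          Real.Gamma ((μ:ℝ) + m + 2/α))
      = ((μ:ℝ) ^ (μ + m) / (μ:ℝ) ^ ((μ:ℝ) + m + 2/α)) *
        ((α:ℝ) / (2 * Ωt ^ (α * μ) * Real.Gamma μ) *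
          (T ^ ((μ:ℝ) + m + 2/α) / (m.factorial * Ωo ^ (m * α)) * (1/((α:ℝ)/2)) *
            Real.Gamma ((μ:ℝ) + m + 2/α))) := by ring
    _ = _ := by
        rw [hμE]
        have h1 : Real.Gamma μ ≠ 0 := hΓ.ne'
        have h2 : Ωt ^ (α * μ) ≠ 0 := by positivity
        have h3 : Ωo ^ (m * α) ≠ 0 := by positivity
        have h4 : (μ:ℝ) ^ ((2:ℝ)/α) ≠ 0 := by positivity
        have h5 : (m.factorial : ℝ) ≠ 0 := hfac.ne'
        field_simp

/-- Mean of `g_min = min{g_s, g_w}` computed from its PDF (Ω̃ = 1/(Ωs^{−α}+Ωw^{−α})). -/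
theorem alphaMu_min_mean (α μ : ℕ) (hα : 1 ≤ α) (hμ : 1 ≤ μ)
    (Ωs Ωw : ℝ) (hΩs : 0 < Ωs) (hΩw : 0 < Ωw) :
    ∫ x in Set.Ioi (0:ℝ),
      x * ((α * Real.exp (-(μ:ℝ) * x ^ ((α : ℝ) / 2) / (((Ωs ^ α)⁻¹ + (Ωw ^ α)⁻¹)⁻¹))) /
            (2 * Ωs ^ (α * μ) * Real.Gamma μ) *
          ∑ m ∈ Finset.range μ,
            (μ:ℝ) ^ (μ + m) * x ^ ((α * (μ + m) : ℝ) / 2 - 1) / (m.factorial * Ωw ^ (m * α)) +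
         (α * Real.exp (-(μ:ℝ) * x ^ ((α : ℝ) / 2) / (((Ωs ^ α)⁻¹ + (Ωw ^ α)⁻¹)⁻¹))) /
            (2 * Ωw ^ (α * μ) * Real.Gamma μ) *
          ∑ n ∈ Finset.range μ,
            (μ:ℝ) ^ (μ + n) * x ^ ((α * (μ + n) : ℝ) / 2 - 1) / (n.factorial * Ωs ^ (n * α)))
    = (1 / (Ωs ^ (α * μ) * Real.Gamma μ)) *
        ∑ m ∈ Finset.range μ,
          (((Ωs ^ α)⁻¹ + (Ωw ^ α)⁻¹)⁻¹ ^ ((μ + m : ℝ) + 2 / α) /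
            (m.factorial * (μ:ℝ) ^ ((2:ℝ)/α) * Ωw ^ (m * α))) *
          Real.Gamma ((μ:ℝ) + m + 2 / α) +
      (1 / (Ωw ^ (α * μ) * Real.Gamma μ)) *
        ∑ n ∈ Finset.range μ,
          (((Ωs ^ α)⁻¹ + (Ωw ^ α)⁻¹)⁻¹ ^ ((μ + n : ℝ) + 2 / α) /
            (n.factorial * (μ:ℝ) ^ ((2:ℝ)/α) * Ωs ^ (n * α))) *
          Real.Gamma ((μ:ℝ) + n + 2 / α) := by
  have hT : (0:ℝ) < ((Ωs ^ α)⁻¹ + (Ωw ^ α)⁻¹)⁻¹ := by positivity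
  obtain ⟨i1, e1⟩ := half α μ hα hμ Ωs Ωw _ hΩs hΩw hT
  obtain ⟨i2, e2⟩ := half α μ hα hμ Ωw Ωs _ hΩw hΩs hT
  have hsplit : EqOn (fun x : ℝ =>
      x * ((α * Real.exp (-(μ:ℝ) * x ^ ((α : ℝ) / 2) / (((Ωs ^ α)⁻¹ + (Ωw ^ α)⁻¹)⁻¹))) /
            (2 * Ωs ^ (α * μ) * Real.Gamma μ) *
          ∑ m ∈ Finset.range μ,
            (μ:ℝ) ^ (μ + m) * x ^ ((α * (μ + m) : ℝ) / 2 - 1) / (m.factorial * Ωw ^ (m * α)) +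
         (α * Real.exp (-(μ:ℝ) * x ^ ((α : ℝ) / 2) / (((Ωs ^ α)⁻¹ + (Ωw ^ α)⁻¹)⁻¹))) /
            (2 * Ωw ^ (α * μ) * Real.Gamma μ) *
          ∑ n ∈ Finset.range μ,
            (μ:ℝ) ^ (μ + n) * x ^ ((α * (μ + n) : ℝ) / 2 - 1) / (n.factorial * Ωs ^ (n * α))))
      (fun x : ℝ =>
      x * ((α * Real.exp (-(μ:ℝ) * x ^ ((α : ℝ) / 2) / (((Ωs ^ α)⁻¹ + (Ωw ^ α)⁻¹)⁻¹))) /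
            (2 * Ωs ^ (α * μ) * Real.Gamma μ) *
          ∑ m ∈ Finset.range μ,
            (μ:ℝ) ^ (μ + m) * x ^ ((α * (μ + m) : ℝ) / 2 - 1) / (m.factorial * Ωw ^ (m * α))) +
      x * ((α * Real.exp (-(μ:ℝ) * x ^ ((α : ℝ) / 2) / (((Ωs ^ α)⁻¹ + (Ωw ^ α)⁻¹)⁻¹))) /
            (2 * Ωw ^ (α * μ) * Real.Gamma μ) *
          ∑ n ∈ Finset.range μ,
            (μ:ℝ) ^ (μ + n) * x ^ ((α * (μ + n) : ℝ) / 2 - 1) / (n.factorial * Ωs ^ (n * α))))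
      (Set.Ioi 0) := fun x _ => mul_add x _ _
  rw [setIntegral_congr_fun measurableSet_Ioi hsplit,
    MeasureTheory.integral_add i1 i2, e1, e2]
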